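/- Let G be a finite group with rank(G) = rank(G/G'). Then for every positive integer n, rank(G^n) = n · rank(G). -/

import Mathlib

open Subgroup

/-- Minimal length of a word over `X` (positive letters only) representing `g`. -/
noncomputable def wLen {G : Type*} [Group G] (X : Set G) (g : G) : ℕ :=
  sInf {n | ∃ l : List G, (∀ x ∈ l, x ∈ X) ∧ l.length = n ∧ l.prod = g}

/-- Minimal length of a word over `X ∪ X⁻¹` representing `g`. -/
noncomputable def sLen {G : Type*} [Group G] (X : Set G) (g : G) : ℕ :=
  sInf {n | ∃ l : List G, (∀ x ∈ l, x ∈ X ∨ x⁻¹ ∈ X) ∧ l.length = n ∧ l.prod = g}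

/-- Diameter of `G` with respect to `X` (positive words). -/
noncomputable def diamW (G : Type*) [Group G] (X : Set G) : ℕ :=
  sSup (Set.range (wLen X))

/-- Symmetric diameter of `G` with respect to `X`. -/
noncomputable def diamS (G : Type*) [Group G] (X : Set G) : ℕ :=
  sSup (Set.range (sLen X))

/-- Maximum diameter over all generating sets. -/
noncomputable def DW (G : Type*) [Group G] : ℕ :=
  sSup {d | ∃ X : Set G, Subgroup.closure X = ⊤ ∧ d = diamW G X}

/-- Maximum symmetric diameter over all generating sets. -/
noncomputable def DS (G : Type*) [Group G] : ℕ :=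
  sSup {d | ∃ X : Set G, Subgroup.closure X = ⊤ ∧ d = diamS G X}

/-- Minimal size of a generating set of `G`. -/
noncomputable def rk (G : Type*) [Group G] : ℕ :=
  sInf {n | ∃ S : Finset G, S.card = n ∧ Subgroup.closure (S : Set G) = ⊤}

lemma rk_le {G : Type*} [Group G] {S : Finset G} (hS : Subgroup.closure (S : Set G) = ⊤) :
    rk G ≤ S.card := Nat.sInf_le ⟨S, rfl, hS⟩

lemma rk_spec (G : Type*) [Group G] [Finite G] :
    ∃ S : Finset G, S.card = rk G ∧ Subgroup.closure (S : Set G) = ⊤ := by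
  have : Fintype G := Fintype.ofFinite G
  have hne : {n | ∃ S : Finset G, S.card = n ∧ Subgroup.closure (S : Set G) = ⊤}.Nonempty :=
    ⟨(Finset.univ : Finset G).card, Finset.univ, rfl, by simp⟩
  obtain ⟨S, h1, h2⟩ := Nat.sInf_mem hne
  exact ⟨S, h1, h2⟩

lemma rk_le_of_surjective {G H : Type*} [Group G] [Group H] [Finite G] (f : G →* H)
    (hf : Function.Surjective f) : rk H ≤ rk G := by
  classical
  obtain ⟨S, h1, h2⟩ := rk_spec G
  have hcl : Subgroup.closure ((S.image f : Finset H) : Set H) = ⊤ := by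
    rw [Finset.coe_image, ← MonoidHom.map_closure, h2]
    exact Subgroup.map_top_of_surjective f hf
  calc rk H ≤ (S.image f).card := rk_le hcl
    _ ≤ S.card := Finset.card_image_le
    _ = rk G := h1

lemma rk_congr {G H : Type*} [Group G] [Group H] [Finite G] [Finite H] (e : G ≃* H) :
    rk G = rk H :=
  le_antisymm (rk_le_of_surjective e.symm.toMonoidHom e.symm.surjective)
    (rk_le_of_surjective e.toMonoidHom e.surjective)

/-- Bridge between multiplicative and additive closures. -/
lemma closure_top_iff_add {M : Type*} [AddGroup M] (S : Set (Multiplicative M)) :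
    Subgroup.closure S = ⊤ ↔ AddSubgroup.closure (Multiplicative.toAdd '' S) = ⊤ := by
  constructor
  · intro h
    rw [AddSubgroup.eq_top_iff']
    intro x
    have hx : Multiplicative.ofAdd x ∈ Subgroup.closure S := by rw [h]; trivial
    refine Subgroup.closure_induction
      (p := fun g _ => Multiplicative.toAdd g ∈ AddSubgroup.closure (Multiplicative.toAdd '' S))
      (fun g hg => AddSubgroup.subset_closure ⟨g, hg, rfl⟩) (AddSubgroup.zero_mem _)
      (fun a b _ _ ha hb => AddSubgroup.add_mem _ ha hb)
      (fun a _ ha => AddSubgroup.neg_mem _ ha) hx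
  · intro h
    rw [Subgroup.eq_top_iff']
    intro x
    have hx : Multiplicative.toAdd x ∈ AddSubgroup.closure (Multiplicative.toAdd '' S) := by
      rw [h]; trivial
    refine AddSubgroup.closure_induction
      (p := fun g _ => Multiplicative.ofAdd g ∈ Subgroup.closure S)
      (fun g hg => ?_) (Subgroup.one_mem _)
      (fun a b _ _ ha hb => Subgroup.mul_mem _ ha hb)
      (fun a _ ha => Subgroup.inv_mem _ ha) hx
    obtain ⟨y, hy, rfl⟩ := hg
    exact Subgroup.subset_closure hy

lemma rk_pi_le {G : Type*} [Group G] [Finite G] (n : ℕ) :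
    rk (Fin n → G) ≤ n * rk G := by
  classical
  obtain ⟨S, h1, h2⟩ := rk_spec G
  set T : Finset (Fin n → G) :=
    Finset.univ.biUnion (fun i => S.image (MonoidHom.mulSingle (fun _ : Fin n => G) i)) with hT
  have single_mem : ∀ (i : Fin n) (g : G),
      Pi.mulSingle i g ∈ Subgroup.closure (T : Set (Fin n → G)) := by
    intro i g
    have : Pi.mulSingle i g ∈
        Subgroup.map (MonoidHom.mulSingle (fun _ : Fin n => G) i) (Subgroup.closure (S : Set G)) :=
      ⟨g, by rw [h2]; trivial, rfl⟩
    rw [MonoidHom.map_closure] at this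
    refine Subgroup.closure_mono ?_ this
    rintro y ⟨z, hz, rfl⟩
    simp only [hT, Finset.coe_biUnion, Finset.coe_image, Set.mem_iUnion]
    exact ⟨i, by simp, z, hz, rfl⟩
  have key : ∀ (J : Finset (Fin n)) (x : Fin n → G), (∀ i, i ∉ J → x i = 1) →
      x ∈ Subgroup.closure (T : Set (Fin n → G)) := by
    intro J
    induction J using Finset.induction_on with
    | empty =>
      intro x hx
      have : x = 1 := funext fun i => hx i (by simp)
      rw [this]; exact Subgroup.one_mem _
    | @insert a J ha IH =>
      intro x hx
      have hx' : x = Pi.mulSingle a (x a) * Function.update x a 1 := by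
        funext j
        by_cases hj : j = a
        · subst hj; simp
        · simp [Function.update_of_ne hj, Pi.mulSingle_eq_of_ne hj]
      rw [hx']
      refine Subgroup.mul_mem _ (single_mem a (x a)) (IH _ (fun i hi => ?_))
      by_cases hia : i = a
      · subst hia; simp
      · rw [Function.update_of_ne hia]
        exact hx i (by simp [hi, hia])
  have hcl : Subgroup.closure (T : Set (Fin n → G)) = ⊤ := by
    rw [eq_top_iff']
    exact fun x => key Finset.univ x (fun i hi => absurd (Finset.mem_univ i) hi)
  calc rk (Fin n → G) ≤ T.card := rk_le hcl
    _ ≤ ∑ i : Fin n, (S.image (MonoidHom.mulSingle (fun _ : Fin n => G) i)).card :=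
        Finset.card_biUnion_le
    _ ≤ ∑ _i : Fin n, S.card := Finset.sum_le_sum (fun i _ => Finset.card_image_le)
    _ = n * rk G := by simp [h1, mul_comm]

/-- If `H` surjects onto the multiplicative version of a `ZMod p`-vector space `V`,
then `finrank V ≤ rk H`. -/
lemma finrank_le_rk {H : Type*} [Group H] [Finite H] {p : ℕ} [Fact p.Prime]
    {V : Type*} [AddCommGroup V] [Module (ZMod p) V]
    (φ : H →* Multiplicative V) (hφ : Function.Surjective φ) :
    Module.finrank (ZMod p) V ≤ rk H := by
  classical
  obtain ⟨S, h1, h2⟩ := rk_spec H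
  have hcl : Subgroup.closure ((S.image φ : Finset (Multiplicative V)) : Set (Multiplicative V)) = ⊤ := by
    rw [Finset.coe_image, ← MonoidHom.map_closure, h2]
    exact Subgroup.map_top_of_surjective φ hφ
  rw [closure_top_iff_add] at hcl
  set T : Finset V := (S.image φ).image (⇑Multiplicative.toAdd) with hTdef
  have hT : AddSubgroup.closure (T : Set V) = ⊤ := by
    rw [hTdef, Finset.coe_image]; exact hcl
  have hspan : Submodule.span (ZMod p) (T : Set V) = ⊤ := by
    rw [eq_top_iff]
    intro x _
    have hx : x ∈ AddSubgroup.closure (T : Set V) := by rw [hT]; trivial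
    exact AddSubgroup.closure_induction (fun g hg => Submodule.subset_span hg)
      (Submodule.zero_mem _) (fun a b _ _ ha hb => Submodule.add_mem _ ha hb)
      (fun a _ ha => Submodule.neg_mem _ ha) hx
  have h3 : Module.finrank (ZMod p) (Submodule.span (ZMod p) (T : Set V)) ≤ T.card :=
    finrank_span_finset_le_card T
  rw [hspan] at h3
  calc Module.finrank (ZMod p) V = Module.finrank (ZMod p) (⊤ : Submodule (ZMod p) V) :=
        (finrank_top _ _).symm
    _ ≤ T.card := h3
    _ ≤ (S.image φ).card := Finset.card_image_le
    _ ≤ S.card := Finset.card_image_le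
    _ = rk H := h1

/-- The set of indices with the same prime as `i` and positive exponent. -/
def pClass {ι : Type*} [Fintype ι] (p e : ι → ℕ) (i : ι) : Finset ι :=
  Finset.univ.filter fun i' => 0 < e i' ∧ p i' = p i

/-- Maximal size of a prime class. -/
def cB {ι : Type*} [Fintype ι] (p e : ι → ℕ) : ℕ :=
  Finset.univ.sup fun i => (pClass p e i).card

section Key

variable {ι : Type*} [Fintype ι] [DecidableEq ι] (p e : ι → ℕ)

/-- rank index within one's prime class -/
noncomputable def rIdx (i : ι) : ℕ :=
  ((pClass p e i).filter (fun i' => (Fintype.equivFin ι i' : ℕ) < (Fintype.equivFin ι i : ℕ))).card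

omit [DecidableEq ι] in
lemma key_inj : Function.Injective (fun i : ι => (Fintype.equivFin ι i : ℕ)) :=
  fun _ _ hab => (Fintype.equivFin ι).injective (Fin.val_injective hab)

lemma rIdx_lt {i : ι} (he : 0 < e i) : rIdx p e i < cB p e := by
  have hmem : i ∈ pClass p e i := by simp [pClass, he]
  have hsub : (pClass p e i).filter
      (fun i' => (Fintype.equivFin ι i' : ℕ) < (Fintype.equivFin ι i : ℕ)) ⊆
      (pClass p e i).erase i := by
    intro x hx
    rw [Finset.mem_filter] at hx
    refine Finset.mem_erase.mpr ⟨fun hxi => ?_, hx.1⟩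
    subst hxi; exact lt_irrefl _ hx.2
  have h1 : rIdx p e i ≤ (pClass p e i).card - 1 := by
    rw [← Finset.card_erase_of_mem hmem]
    exact Finset.card_le_card hsub
  have h2 : 0 < (pClass p e i).card := Finset.card_pos.mpr ⟨i, hmem⟩
  calc rIdx p e i ≤ (pClass p e i).card - 1 := h1
    _ < (pClass p e i).card := Nat.sub_lt h2 one_pos
    _ ≤ cB p e := Finset.le_sup (f := fun i => (pClass p e i).card) (Finset.mem_univ i)

lemma rIdx_mono {i i' : ι} (he : 0 < e i) (he' : 0 < e i') (hpp : p i' = p i)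
    (hkey : (Fintype.equivFin ι i : ℕ) < (Fintype.equivFin ι i' : ℕ)) :
    rIdx p e i < rIdx p e i' := by
  have hclass : pClass p e i' = pClass p e i := by
    simp only [pClass, hpp]
  have hsub : insert i ((pClass p e i).filter
      (fun x => (Fintype.equivFin ι x : ℕ) < (Fintype.equivFin ι i : ℕ))) ⊆
      (pClass p e i').filter
      (fun x => (Fintype.equivFin ι x : ℕ) < (Fintype.equivFin ι i' : ℕ)) := by
    intro x hx
    rw [hclass, Finset.mem_filter]
    rcases Finset.mem_insert.mp hx with rfl | hx
    · exact ⟨by simp [pClass, he], hkey⟩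
    · rw [Finset.mem_filter] at hx
      exact ⟨hx.1, hx.2.trans hkey⟩
  have hnotmem : i ∉ (pClass p e i).filter
      (fun x => (Fintype.equivFin ι x : ℕ) < (Fintype.equivFin ι i : ℕ)) := by
    simp [Finset.mem_filter]
  calc rIdx p e i < rIdx p e i + 1 := Nat.lt_succ_self _
    _ = (insert i ((pClass p e i).filter
        (fun x => (Fintype.equivFin ι x : ℕ) < (Fintype.equivFin ι i : ℕ)))).card := by
        rw [Finset.card_insert_of_notMem hnotmem]; rfl
    _ ≤ rIdx p e i' := Finset.card_le_card hsub

lemma rIdx_inj {i i' : ι} (he : 0 < e i) (he' : 0 < e i') (hpp : p i' = p i)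
    (hr : rIdx p e i' = rIdx p e i) : i' = i := by
  by_contra hne
  have hkey : (Fintype.equivFin ι i : ℕ) ≠ (Fintype.equivFin ι i' : ℕ) :=
    fun hh => hne (key_inj hh).symm
  rcases lt_or_gt_of_ne hkey with hlt | hgt
  · have := rIdx_mono p e he he' hpp hlt
    omega
  · have := rIdx_mono p e he' he hpp.symm hgt
    omega

/-- B1 : rank of a product of cyclic prime-power groups is at most the maximal prime
class size. -/
lemma rk_pi_zmod_le (hp : ∀ i, (p i).Prime) :
    rk (Multiplicative (∀ i, ZMod (p i ^ e i))) ≤ cB p e := by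
  classical
  set A := ∀ i, ZMod (p i ^ e i) with hA
  set g : Fin (cB p e) → A :=
    fun j => fun i'' => if 0 < e i'' ∧ rIdx p e i'' = (j : ℕ) then 1 else 0 with hg
  set T : Finset (Multiplicative A) :=
    Finset.univ.image (fun j => Multiplicative.ofAdd (g j)) with hT
  have hset : Multiplicative.toAdd '' (T : Set (Multiplicative A)) = Set.range g := by
    ext x
    simp [hT]
  have hclosure : AddSubgroup.closure (Set.range g) = ⊤ := by
    rw [AddSubgroup.eq_top_iff']
    intro x
    rw [← Finset.univ_sum_single x]
    refine AddSubgroup.sum_mem _ (fun i _ => ?_)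
    by_cases he : 0 < e i
    · -- the interesting case
      have hri := rIdx_lt p e he
      set j : Fin (cB p e) := ⟨rIdx p e i, hri⟩ with hjdef
      set M : ℕ := ∏ i' ∈ ((Finset.univ.filter
          (fun i' => 0 < e i' ∧ rIdx p e i' = rIdx p e i)).erase i), p i' ^ e i' with hM
      haveI : NeZero (p i ^ e i) := ⟨pow_ne_zero _ (hp i).pos.ne'⟩
      have hgM : M • g j = Pi.single i ((M : ZMod (p i ^ e i))) := by
        funext i''
        rw [Pi.smul_apply]
        by_cases h1 : i'' = i
        · subst h1
          rw [Pi.single_eq_same]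
          have : g j i'' = 1 := by rw [hg]; simp [he, hjdef]
          rw [this, nsmul_eq_mul, mul_one]
        · rw [Pi.single_eq_of_ne h1]
          by_cases h2 : 0 < e i'' ∧ rIdx p e i'' = rIdx p e i
          · have hmem : i'' ∈ ((Finset.univ.filter
                (fun i' => 0 < e i' ∧ rIdx p e i' = rIdx p e i)).erase i) :=
              Finset.mem_erase.mpr ⟨h1, Finset.mem_filter.mpr ⟨Finset.mem_univ _, h2⟩⟩
            have hdvd : p i'' ^ e i'' ∣ M := Finset.dvd_prod_of_mem _ hmem
            have : g j i'' = 1 := by rw [hg]; simp [h2, hjdef]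
            rw [this, nsmul_eq_mul, mul_one]
            exact (ZMod.natCast_eq_zero_iff _ _).mpr hdvd
          · have : g j i'' = 0 := by
              rw [hg]
              simp only [hjdef]
              exact if_neg h2
            rw [this, smul_zero]
      have hcop : Nat.Coprime M (p i ^ e i) := by
        rw [hM]
        refine Nat.Coprime.prod_left ?_
        intro i' hi'
        rw [Finset.mem_erase, Finset.mem_filter] at hi'
        have hpne : p i' ≠ p i := by
          intro hpp
          exact hi'.1 (rIdx_inj p e he hi'.2.2.1 hpp hi'.2.2.2)
        exact Nat.Coprime.pow _ _ ((Nat.coprime_primes (hp i') (hp i)).mpr hpne)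
      -- for every v, Pi.single i v is in the closure
      set u : (ZMod (p i ^ e i))ˣ := ZMod.unitOfCoprime M hcop with hu
      set v : ZMod (p i ^ e i) := x i with hv
      set k : ℕ := (((u⁻¹ : (ZMod (p i ^ e i))ˣ) : ZMod (p i ^ e i)) * v).val with hk
      have hkv : (k : ZMod (p i ^ e i)) * (M : ZMod (p i ^ e i)) = v := by
        have h1 : (k : ZMod (p i ^ e i)) =
            ((u⁻¹ : (ZMod (p i ^ e i))ˣ) : ZMod (p i ^ e i)) * v := by
          rw [hk]; exact ZMod.natCast_rightInverse _
        have h2 : (M : ZMod (p i ^ e i)) = (u : ZMod (p i ^ e i)) := by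
          rw [hu]; rfl
        rw [h1, h2, mul_comm ((u⁻¹ : (ZMod (p i ^ e i))ˣ) : ZMod (p i ^ e i)) v, mul_assoc,
          ← Units.val_mul, inv_mul_cancel, Units.val_one, mul_one]
      have hsingle : Pi.single i v = k • (M • g j) := by
        rw [hgM, ← Pi.single_smul, nsmul_eq_mul, hkv]
      rw [hsingle]
      exact AddSubgroup.nsmul_mem _ (AddSubgroup.nsmul_mem _
        (AddSubgroup.subset_closure (Set.mem_range_self j)) M) k
    · -- trivial component
      have h0 : p i ^ e i = 1 := by
        rw [Nat.eq_zero_of_not_pos he, pow_zero]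
      haveI : Subsingleton (ZMod (p i ^ e i)) := by rw [h0]; infer_instance
      have : x i = 0 := Subsingleton.elim _ _
      rw [this, Pi.single_zero]
      exact AddSubgroup.zero_mem _
  have hcl : Subgroup.closure (T : Set (Multiplicative A)) = ⊤ := by
    rw [closure_top_iff_add, hset]
    exact hclosure
  calc rk (Multiplicative A) ≤ T.card := rk_le hcl
    _ ≤ (Finset.univ : Finset (Fin (cB p e))).card := Finset.card_image_le
    _ = cB p e := by simp

end Key

lemma mul_cB_le_rk_pi {ι : Type*} [Fintype ι] [DecidableEq ι] (p e : ι → ℕ)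
    (hp : ∀ i, (p i).Prime) (n : ℕ) :
    n * cB p e ≤ rk (Fin n → Multiplicative (∀ i, ZMod (p i ^ e i))) := by
  classical
  by_cases hc0 : cB p e = 0
  · simp [hc0]
  haveI : ∀ i, NeZero (p i ^ e i) := fun i => ⟨pow_ne_zero _ (hp i).pos.ne'⟩
  have hne : Nonempty ι := by
    by_contra hni
    rw [not_nonempty_iff] at hni
    exact hc0 (by simp [cB, Finset.univ_eq_empty])
  obtain ⟨i0, _, hc⟩ := Finset.exists_mem_eq_sup (Finset.univ : Finset ι)
    Finset.univ_nonempty (fun i => (pClass p e i).card)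
  haveI : Fact (p i0).Prime := ⟨hp i0⟩
  haveI : NeZero (p i0) := ⟨(hp i0).pos.ne'⟩
  set C : Finset ι := pClass p e i0 with hC
  have hmemC : ∀ c' : ↥C, 0 < e c'.1 ∧ p c'.1 = p i0 :=
    fun c' => (Finset.mem_filter.mp c'.2).2
  have hdvd : ∀ c' : ↥C, p i0 ∣ p c'.1 ^ e c'.1 := by
    intro c'
    rw [← (hmemC c').2]
    exact dvd_pow_self _ (hmemC c').1.ne'
  -- the additive projection
  set ψ : (∀ i, ZMod (p i ^ e i)) →+ (↥C → ZMod (p i0)) :=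
    { toFun := fun x c' => ZMod.castHom (hdvd c') (ZMod (p i0)) (x c'.1)
      map_zero' := by
        funext c'
        exact map_zero (ZMod.castHom (hdvd c') (ZMod (p i0)))
      map_add' := by
        intro x y
        funext c'
        exact map_add (ZMod.castHom (hdvd c') (ZMod (p i0))) _ _ } with hψ
  have hψsurj : Function.Surjective ψ := by
    intro y
    refine ⟨fun i => if h : i ∈ C then (((y ⟨i, h⟩).val : ℕ) : ZMod (p i ^ e i)) else 0, ?_⟩
    funext c'
    show ZMod.castHom (hdvd c') (ZMod (p i0))
      ((fun i => if h : i ∈ C then (((y ⟨i, h⟩).val : ℕ) : ZMod (p i ^ e i)) else 0) c'.1) = y c'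
    simp only [dif_pos c'.2]
    rw [ZMod.castHom_apply, ZMod.cast_natCast (hdvd c')]
    exact ZMod.natCast_rightInverse _
  set φn : (Fin n → ∀ i, ZMod (p i ^ e i)) →+ (Fin n → (↥C → ZMod (p i0))) :=
    { toFun := fun f j => ψ (f j)
      map_zero' := by funext j; simp
      map_add' := by intro x y; funext j; simp } with hφn
  have hφnsurj : Function.Surjective φn := by
    intro y
    choose x hx using fun j => hψsurj (y j)
    exact ⟨fun j => x j, funext fun j => hx j⟩
  set E : (Fin n → Multiplicative (∀ i, ZMod (p i ^ e i))) ≃*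
      Multiplicative (Fin n → ∀ i, ZMod (p i ^ e i)) :=
    (MulEquiv.piMultiplicative (fun _ : Fin n => ∀ i, ZMod (p i ^ e i))).symm with hE
  set Φ : (Fin n → Multiplicative (∀ i, ZMod (p i ^ e i))) →*
      Multiplicative (Fin n → (↥C → ZMod (p i0))) :=
    (AddMonoidHom.toMultiplicative φn).comp E.toMonoidHom with hΦ
  have hΦsurj : Function.Surjective Φ := by
    rw [hΦ]
    exact Function.Surjective.comp (fun y => hφnsurj y) E.surjective
  have hfr : Module.finrank (ZMod (p i0)) (Fin n → (↥C → ZMod (p i0))) = n * cB p e := by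
    have h1 : Module.finrank (ZMod (p i0)) (↥C → ZMod (p i0)) = cB p e := by
      rw [Module.finrank_pi, Fintype.card_coe]
      exact hc.symm
    rw [Module.finrank_pi_fintype]
    simp [h1, Finset.sum_const, mul_comm]
  calc n * cB p e = Module.finrank (ZMod (p i0)) (Fin n → (↥C → ZMod (p i0))) := hfr.symm
    _ ≤ rk (Fin n → Multiplicative (∀ i, ZMod (p i ^ e i))) := finrank_le_rk Φ hΦsurj


theorem stmt4 {G : Type*} [Group G] [Fintype G]
    (h : rk G = rk (G ⧸ commutator G)) :
    ∀ n : ℕ, 0 < n → rk (Fin n → G) = n * rk G := by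
  classical
  intro n _hn
  refine le_antisymm (rk_pi_le n) ?_
  -- Lower bound via the abelianization and the structure theorem
  have hsurj : Function.Surjective (QuotientGroup.mk' (commutator G)) :=
    QuotientGroup.mk'_surjective _
  haveI hfinQ : Finite (G ⧸ commutator G) := Finite.of_surjective _ hsurj
  haveI : Finite (Abelianization G) := hfinQ
  obtain ⟨ι, hι, p, e, hp, ⟨eqv⟩⟩ :
      ∃ (ι : Type) (_ : Fintype ι) (p e : ι → ℕ), (∀ i, Nat.Prime (p i)) ∧
        Nonempty (Additive (Abelianization G) ≃+ DirectSum ι fun i => ZMod (p i ^ e i)) := by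
    obtain ⟨ι, hι, p, hp, e, he⟩ :=
      AddCommGroup.equiv_directSum_zmod_of_finite (Additive (Abelianization G))
    exact ⟨ι, hι, p, e, hp, he⟩
  haveI : ∀ i, NeZero (p i ^ e i) := fun i => ⟨pow_ne_zero _ (hp i).pos.ne'⟩
  set P := ∀ i, Multiplicative (ZMod (p i ^ e i)) with hP
  set Q := Multiplicative (∀ i, ZMod (p i ^ e i)) with hQ
  have E0 : Abelianization G ≃* P :=
    MulEquiv.toAdditive.symm <| eqv.trans <| (DirectSum.addEquivProd _).trans <|
      MulEquiv.toAdditiveRight <| MulEquiv.piMultiplicative _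
  have E1 : Q ≃* P := MulEquiv.piMultiplicative _
  haveI : Finite P := Finite.of_equiv _ E0.toEquiv
  haveI : Finite Q := Finite.of_equiv _ E1.symm.toEquiv
  -- rk G = rk Q
  have hrkQ : rk G = rk Q := by
    calc rk G = rk (Abelianization G) := h
      _ = rk P := rk_congr E0
      _ = rk Q := (rk_congr E1).symm
  -- surjection (Fin n → G) →* (Fin n → Q)
  set f : G →* Q :=
    E1.symm.toMonoidHom.comp (E0.toMonoidHom.comp (QuotientGroup.mk' (commutator G))) with hf
  have hfsurj : Function.Surjective f := by
    rw [hf]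
    exact E1.symm.surjective.comp (E0.surjective.comp hsurj)
  set F : (Fin n → G) →* (Fin n → Q) :=
    { toFun := fun x j => f (x j)
      map_one' := by funext j; simp
      map_mul' := by intro x y; funext j; simp } with hF
  have hFsurj : Function.Surjective F := by
    intro y
    choose x hx using fun j => hfsurj (y j)
    exact ⟨fun j => x j, funext fun j => hx j⟩
  calc n * rk G = n * rk Q := by rw [hrkQ]
    _ ≤ n * cB p e := Nat.mul_le_mul_left n (rk_pi_zmod_le p e hp)
    _ ≤ rk (Fin n → Q) := mul_cB_le_rk_pi p e hp n
    _ ≤ rk (Fin n → G) := rk_le_of_surjective F hFsurj
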